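/- Let t ≥ 0 be an integer and let F be a forest with |F| ≥ t + 1. Then there exists a vertex s of F and a subset V' of the vertices of F not containing s, such that no edge of F joins a vertex of V' to a vertex outside V' ∪ {s}, and t ≤ |V'| ≤ 2t. -/

import Mathlib

open Finset

section Aux

variable {V : Type} [Fintype V] [DecidableEq V]

/-- The graph `F` with all edges at `x` removed. -/
def pdel (F : SimpleGraph V) (x : V) : SimpleGraph V where
  Adj a b := F.Adj a b ∧ a ≠ x ∧ b ≠ x
  symm := ⟨fun a b h => ⟨h.1.symm, h.2.2, h.2.1⟩⟩
  loopless := ⟨fun a h => F.loopless.irrefl a h.1⟩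

lemma pdel_le (F : SimpleGraph V) (x : V) : pdel F x ≤ F := by intro a b h; exact h.1

lemma pdel_walk_ne' {F : SimpleGraph V} {x : V} :
    ∀ {z y : V}, (pdel F x).Walk z y → y = x → z = x := by
  intro z y p
  induction p with
  | nil => exact id
  | cons h q ih => intro hy; exact absurd (ih hy) h.2.2

lemma pdel_support_ne {F : SimpleGraph V} {x a b : V} (p : (pdel F x).Walk a b)
    (ha : a ≠ x) : x ∉ p.support := by
  induction p with
  | nil => simpa using ha.symm
  | cons h q ih =>
    simp only [SimpleGraph.Walk.support_cons, List.mem_cons]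
    push_neg
    exact ⟨fun hx => ha hx.symm, ih h.2.2⟩

/-- In an acyclic graph, two neighbors of `x` that are connected avoiding `x`
must coincide. -/
lemma unique_attach {F : SimpleGraph V} (hF : F.IsAcyclic) {x u u' : V}
    (hu : F.Adj x u) (hu' : F.Adj x u')
    (hr : (pdel F x).Reachable u u') : u = u' := by
  obtain ⟨w⟩ := hr
  set q := w.toPath with hq
  have hqF : ∀ e ∈ q.1.edges, e ∈ F.edgeSet := fun e he =>
    (SimpleGraph.edgeSet_mono (pdel_le F x)) (q.1.edges_subset_edgeSet he)
  have hxq : x ∉ q.1.support := pdel_support_ne q.1 hu.ne'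
  have p2 : F.Walk x u' := SimpleGraph.Walk.cons hu (q.1.transfer F hqF)
  have hp2 : (SimpleGraph.Walk.cons hu (q.1.transfer F hqF)).IsPath := by
    rw [SimpleGraph.Walk.cons_isPath_iff]
    refine ⟨q.2.transfer hqF, ?_⟩
    rwa [SimpleGraph.Walk.support_transfer]
  have hp1 : (SimpleGraph.Walk.cons hu' SimpleGraph.Walk.nil).IsPath := by
    simp [hu'.ne]
  have := SimpleGraph.isAcyclic_iff_path_unique.mp hF
    ⟨SimpleGraph.Walk.cons hu' SimpleGraph.Walk.nil, hp1⟩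
    ⟨SimpleGraph.Walk.cons hu (q.1.transfer F hqF), hp2⟩
  have hsup := congrArg (fun p : F.Path x u' => p.1.support) this
  simp only [SimpleGraph.Walk.support_cons, SimpleGraph.Walk.support_nil] at hsup
  have h2 := (q.1.transfer F hqF).support_eq_cons
  rw [h2] at hsup
  simp only [List.cons.injEq] at hsup
  exact hsup.2.1.symm

/-- The connected component of `z` in `F` with `x` deleted. -/
noncomputable def compF (F : SimpleGraph V) (x z : V) : Finset V :=
  @Finset.filter _ (fun y => (pdel F x).Reachable z y) (Classical.decPred _) Finset.univ

lemma mem_compF {F : SimpleGraph V} {x z y : V} :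
    y ∈ compF F x z ↔ (pdel F x).Reachable z y := by
  simp [compF]

lemma compF_eq_of_mem {F : SimpleGraph V} {x z z' y : V}
    (h : y ∈ compF F x z) (h' : y ∈ compF F x z') : compF F x z = compF F x z' := by
  rw [mem_compF] at h h'
  ext w
  rw [mem_compF, mem_compF]
  constructor
  · intro hw; exact (h'.trans h.symm).trans hw
  · intro hw; exact (h.trans h'.symm).trans hw

/-- Greedy lemma: from a family of sets each of size `≤ t` with total size `≥ t`,
one can pick a subfamily with total size in `[t, 2t]`. -/
lemma greedy (t : ℕ) : ∀ (n : ℕ) (S : Finset (Finset V)), S.card ≤ n →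
    (∀ D ∈ S, D.card ≤ t) → t ≤ ∑ D ∈ S, D.card →
    ∃ T ⊆ S, t ≤ ∑ D ∈ T, D.card ∧ ∑ D ∈ T, D.card ≤ 2 * t := by
  intro n
  induction n with
  | zero =>
    intro S hS hle hsum
    refine ⟨S, le_refl _, hsum, ?_⟩
    have : S = ∅ := Finset.card_eq_zero.mp (Nat.le_zero.mp hS)
    subst this
    simp
  | succ n ih =>
    intro S hS hle hsum
    by_cases h2 : ∑ D ∈ S, D.card ≤ 2 * t
    · exact ⟨S, le_refl _, hsum, h2⟩
    · push_neg at h2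
      have hSne : S.Nonempty := by
        rcases S.eq_empty_or_nonempty with h | h
        · subst h; simp at h2
        · exact h
      obtain ⟨D, hD⟩ := hSne
      have hsum' : ∑ E ∈ S.erase D, E.card = (∑ E ∈ S, E.card) - D.card := by
        rw [← Finset.sum_erase_add S _ hD]; omega
      have hDle : D.card ≤ t := hle D hD
      obtain ⟨T, hT, h1, h2'⟩ := ih (S.erase D)
        (by have := Finset.card_erase_of_mem hD; omega)
        (fun E hE => hle E (Finset.mem_of_mem_erase hE))
        (by omega)
      exact ⟨T, hT.trans (Finset.erase_subset _ _), h1, h2'⟩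

/-- Key descent lemma: if `C` is a set of vertices from which edges leave only
through `x`, and `C` has more than `t` vertices, then the separator exists. -/
lemma key {F : SimpleGraph V} (hF : F.IsAcyclic) (t : ℕ) :
    ∀ (n : ℕ) (C : Finset V) (x : V), C.card ≤ n → x ∈ C →
    (∀ u ∈ C, ∀ z, F.Adj u z → z ∉ C → u = x) →
    t + 1 ≤ C.card →
    ∃ (s : V) (V' : Finset V), s ∉ V' ∧
      (∀ u v : V, F.Adj u v → u ∈ V' → (v ∈ V' ∨ v = s)) ∧
      t ≤ V'.card ∧ V'.card ≤ 2 * t := by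
  intro n
  induction n with
  | zero => intro C x hn _ _ hcard; omega
  | succ n ih =>
    intro C x hn hx hbr hcard
    -- components of C \ {x}
    have hcompsub : ∀ z ∈ C.erase x, compF F x z ⊆ C.erase x := by
      intro z hz y hy
      rw [mem_compF] at hy
      obtain ⟨p⟩ := hy
      obtain ⟨hzx, hzC⟩ := Finset.mem_erase.mp hz
      clear hz
      induction p with
      | nil => exact Finset.mem_erase.mpr ⟨hzx, hzC⟩
      | @cons a b c h q ihp =>
        have hbC : b ∈ C := by
          by_contra hb
          exact h.2.1 (hbr a hzC b h.1 hb)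
        exact ihp h.2.2 hbC
    set S : Finset (Finset V) := (C.erase x).image (compF F x) with hSdef
    have hdisj : ∀ D1 ∈ S, ∀ D2 ∈ S, D1 ≠ D2 → Disjoint D1 D2 := by
      intro D1 h1 D2 h2 hne
      obtain ⟨z1, hz1, rfl⟩ := Finset.mem_image.mp h1
      obtain ⟨z2, hz2, rfl⟩ := Finset.mem_image.mp h2
      rw [Finset.disjoint_left]
      intro y hy1 hy2
      exact hne (compF_eq_of_mem hy1 hy2)
    have hcover : C.erase x = S.biUnion id := by
      apply Finset.Subset.antisymm
      · intro z hz
        refine Finset.mem_biUnion.mpr ⟨compF F x z, Finset.mem_image_of_mem _ hz, ?_⟩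
        exact mem_compF.mpr (SimpleGraph.Reachable.refl z)
      · intro y hy
        obtain ⟨D, hD, hyD⟩ := Finset.mem_biUnion.mp hy
        obtain ⟨z, hz, rfl⟩ := Finset.mem_image.mp hD
        exact hcompsub z hz hyD
    have hsumS : ∑ D ∈ S, D.card = (C.erase x).card := by
      rw [hcover]
      exact (Finset.card_biUnion (t := id) hdisj).symm
    have hcarderase : (C.erase x).card = C.card - 1 := Finset.card_erase_of_mem hx
    by_cases hsmall : ∀ D ∈ S, D.card ≤ t
    · -- all components small: greedy
      obtain ⟨T, hTS, ht1, ht2⟩ := greedy t S.card S (le_refl _) hsmall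
        (by rw [hsumS, hcarderase]; omega)
      refine ⟨x, T.biUnion id, ?_, ?_, ?_, ?_⟩
      · intro hxT
        obtain ⟨D, hD, hxD⟩ := Finset.mem_biUnion.mp hxT
        obtain ⟨z, hz, rfl⟩ := Finset.mem_image.mp (hTS hD)
        exact (Finset.mem_erase.mp (hcompsub z hz hxD)).1 rfl
      · intro u v huv hu
        obtain ⟨D, hD, huD⟩ := Finset.mem_biUnion.mp hu
        obtain ⟨z, hz, rfl⟩ := Finset.mem_image.mp (hTS hD)
        by_cases hvx : v = x
        · exact Or.inr hvx
        · left
          have hux : u ≠ x := (Finset.mem_erase.mp (hcompsub z hz huD)).1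
          have : v ∈ compF F x z :=
            mem_compF.mpr ((mem_compF.mp huD).trans
              (SimpleGraph.Adj.reachable ⟨huv, hux, hvx⟩))
          exact Finset.mem_biUnion.mpr ⟨_, hD, this⟩
      · have hTcard : (T.biUnion id).card = ∑ D ∈ T, D.card :=
          Finset.card_biUnion (t := id) (fun D1 h1 D2 h2 => hdisj D1 (hTS h1) D2 (hTS h2))
        rw [hTcard]; exact ht1
      · have hTcard : (T.biUnion id).card = ∑ D ∈ T, D.card :=
          Finset.card_biUnion (t := id) (fun D1 h1 D2 h2 => hdisj D1 (hTS h1) D2 (hTS h2))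
        rw [hTcard]; exact ht2
    · -- some component is big: descend into it
      push_neg at hsmall
      obtain ⟨D, hDS, hDbig⟩ := hsmall
      obtain ⟨z0, hz0, rfl⟩ := Finset.mem_image.mp hDS
      have hDsub := hcompsub z0 hz0
      -- find the root of the branch D
      have hleave : ∀ u ∈ compF F x z0, ∀ w, F.Adj u w → w ∉ compF F x z0 → w = x := by
        intro u hu w huw hw
        by_contra hwx
        have hux : u ≠ x := (Finset.mem_erase.mp (hDsub hu)).1
        exact hw (mem_compF.mpr ((mem_compF.mp hu).trans
          (SimpleGraph.Adj.reachable ⟨huw, hux, hwx⟩)))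
      have hroot : ∃ r ∈ compF F x z0,
          ∀ u ∈ compF F x z0, ∀ w, F.Adj u w → w ∉ compF F x z0 → u = r := by
        by_cases hA : ∃ u ∈ compF F x z0, F.Adj u x
        · obtain ⟨u0, hu0, hu0x⟩ := hA
          refine ⟨u0, hu0, ?_⟩
          intro u hu w huw hw
          have hwx : w = x := hleave u hu w huw hw
          subst hwx
          exact unique_attach hF huw.symm hu0x.symm
            ((mem_compF.mp hu).symm.trans (mem_compF.mp hu0))
        · push_neg at hA
          refine ⟨z0, mem_compF.mpr (SimpleGraph.Reachable.refl z0), ?_⟩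
          intro u hu w huw hw
          have hwx : w = x := hleave u hu w huw hw
          subst hwx
          exact absurd huw (by simpa using hA u hu)
      obtain ⟨r, hr, hrbr⟩ := hroot
      have hDltC : (compF F x z0).card ≤ n := by
        have h1 : (compF F x z0).card ≤ (C.erase x).card := Finset.card_le_card hDsub
        omega
      exact ih (compF F x z0) r hDltC hr hrbr (by omega)

end Aux

/-- Separator lemma of Chung and Graham: in any forest `F` with at least `t + 1`
vertices there is a vertex `s` and a set `V'` of vertices, not containing `s`, such
that no edge of `F` joins a vertex of `V'` to a vertex outside `V' ∪ {s}`, and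
`t ≤ |V'| ≤ 2t`. -/
theorem stmt_4 {V : Type} [Fintype V] [DecidableEq V]
    (F : SimpleGraph V) (hF : F.IsAcyclic) (t : ℕ)
    (hcard : t + 1 ≤ Fintype.card V) :
    ∃ (s : V) (V' : Finset V), s ∉ V' ∧
      (∀ u v : V, F.Adj u v → u ∈ V' → (v ∈ V' ∨ v = s)) ∧
      t ≤ V'.card ∧ V'.card ≤ 2 * t := by
  have hpos : 0 < Fintype.card V := by omega
  obtain ⟨x⟩ := Fintype.card_pos_iff.mp hpos
  exact key hF t (Fintype.card V) Finset.univ x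
    (by simp) (Finset.mem_univ x)
    (fun u _ z _ hz => absurd (Finset.mem_univ z) hz)
    (by simpa using hcard)
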